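/- Let F be a field of characteristic zero, V an n-dimensional F-vector space, F'/F an extension, and W ⊆ V ⊗_F F' a line whose conjugates under Aut(F'/F) span V ⊗_F F'. Suppose a subgroup Γ ⊆ GL(V) (acting F'-linearly on V ⊗_F F') stabilizes W, and suppose that the centralizer in End_F(V) of the F-subalgebra generated by Γ stabilizes W as well. Then the stabilizer K of W in End_F(V) is a field with [K : F] = n, and hence [F(W) : F] = n. -/

import Mathlib

open TensorProduct

/-- `W` is defined over the intermediate field `M` of `F'/F`. -/
def IsDefinedOver (F F' : Type*) [Field F] [Field F'] [Algebra F F']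
    (V : Type*) [AddCommGroup V] [Module F V]
    (M : IntermediateField F F') (W : Submodule F' (F' ⊗[F] V)) : Prop :=
  ∃ w : ↥M ⊗[F] V,
    W = Submodule.span F' {LinearMap.rTensor V M.val.toLinearMap w}

section Aux
variable {F F' : Type*} [Field F] [Field F'] [Algebra F F']
  {V : Type*} [AddCommGroup V] [Module F V]

/-- The stabilizer of `W` in `End_F(V)`. -/
def stabAlg (W : Submodule F' (F' ⊗[F] V)) : Subalgebra F (Module.End F V) where
  carrier := {φ : Module.End F V | ∀ x ∈ W, LinearMap.baseChange F' φ x ∈ W}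
  mul_mem' := by
    intro a b ha hb x hx
    rw [LinearMap.baseChange_mul, Module.End.mul_apply]
    exact ha _ (hb _ hx)
  one_mem' := by
    intro x hx
    rw [LinearMap.baseChange_one]
    exact hx
  add_mem' := by
    intro a b ha hb x hx
    rw [LinearMap.baseChange_add, LinearMap.add_apply]
    exact W.add_mem (ha _ hx) (hb _ hx)
  zero_mem' := by
    intro x hx
    rw [LinearMap.baseChange_zero, LinearMap.zero_apply]
    exact W.zero_mem
  algebraMap_mem' := by
    intro r x hx
    rw [Algebra.algebraMap_eq_smul_one, LinearMap.baseChange_smul, LinearMap.baseChange_one,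
      LinearMap.smul_apply, Module.End.one_apply]
    exact W.smul_of_tower_mem r hx

theorem mem_stabAlg {W : Submodule F' (F' ⊗[F] V)} {φ : Module.End F V} :
    φ ∈ stabAlg W ↔ ∀ x ∈ W, LinearMap.baseChange F' φ x ∈ W := Iff.rfl

variable {ι : Type*} [Fintype ι] (e : Module.Basis ι F V)

theorem reprBC (φ : Module.End F V) (x : F' ⊗[F] V) (k : ι) :
    (e.baseChange F').repr (LinearMap.baseChange F' φ x) k
      = ∑ i, (e.baseChange F').repr x i * algebraMap F F' (e.repr (φ (e i)) k) := by
  induction x using TensorProduct.induction_on with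
  | zero => simp
  | tmul a v =>
    have h : e.repr (φ v) k = ∑ i, e.repr v i * e.repr (φ (e i)) k := by
      conv_lhs => rw [← Module.Basis.sum_repr e v]
      simp only [map_sum, map_smul, Finsupp.coe_finset_sum, Finsupp.coe_smul,
        Finset.sum_apply, Pi.smul_apply, smul_eq_mul]
    rw [LinearMap.baseChange_tmul, Module.Basis.baseChange_repr_tmul, h, Finset.sum_smul]
    refine Finset.sum_congr rfl fun i _ => ?_
    rw [Module.Basis.baseChange_repr_tmul, Algebra.smul_def, Algebra.smul_def, map_mul]
    ring
  | add x y hx hy =>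
    simp only [map_add, Finsupp.add_apply, hx, hy, ← Finset.sum_add_distrib, ← add_mul]

omit [Fintype ι] in
theorem reprRT (M : IntermediateField F F') (y : ↥M ⊗[F] V) (k : ι) :
    (e.baseChange F').repr (LinearMap.rTensor V M.val.toLinearMap y) k ∈ M := by
  induction y using TensorProduct.induction_on with
  | zero => simpa using M.zero_mem
  | tmul m v =>
    rw [LinearMap.rTensor_tmul]
    rw [Module.Basis.baseChange_repr_tmul]
    exact M.smul_mem m.2
  | add x y hx hy =>
    simp only [map_add, Finsupp.coe_add, Pi.add_apply]
    exact M.add_mem hx hy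

theorem bcComm' (φ : Module.End F V) (σ : F' ≃ₐ[F] F') (x : F' ⊗[F] V) :
    LinearMap.baseChange F' φ (LinearMap.rTensor V σ.toLinearMap x)
      = LinearMap.rTensor V σ.toLinearMap (LinearMap.baseChange F' φ x) := by
  induction x using TensorProduct.induction_on with
  | zero => simp
  | tmul a v => simp [LinearMap.baseChange_tmul]
  | add x y hx hy => simp [map_add, hx, hy]

theorem killZero (e : Module.Basis ι F V) {W : Submodule F' (F' ⊗[F] V)}
    (hspan : Submodule.span F'
      (⋃ σ : F' ≃ₐ[F] F',
        (LinearMap.rTensor V σ.toLinearMap) '' (W : Set (F' ⊗[F] V))) = ⊤)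
    {w : F' ⊗[F] V} (hw : W = Submodule.span F' {w})
    {χ : Module.End F V} (h : LinearMap.baseChange F' χ w = 0) : χ = 0 := by
  have hker : ∀ x ∈ W, LinearMap.baseChange F' χ x = 0 := by
    intro x hx
    rw [hw, Submodule.mem_span_singleton] at hx
    obtain ⟨c, rfl⟩ := hx
    rw [map_smul, h, smul_zero]
  have htop : ∀ x : F' ⊗[F] V, LinearMap.baseChange F' χ x = 0 := by
    intro x
    have hle : Submodule.span F'
        (⋃ σ : F' ≃ₐ[F] F',
          (LinearMap.rTensor V σ.toLinearMap) '' (W : Set (F' ⊗[F] V)))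
        ≤ LinearMap.ker (LinearMap.baseChange F' χ) := by
      rw [Submodule.span_le]
      rintro y hy
      simp only [Set.mem_iUnion, Set.mem_image] at hy
      obtain ⟨σ, z, hzW, rfl⟩ := hy
      simp only [SetLike.mem_coe, LinearMap.mem_ker]
      rw [bcComm', hker z hzW, map_zero]
    rw [hspan] at hle
    exact hle Submodule.mem_top
  ext v
  have h1 : (1 : F') ⊗ₜ[F] (χ v) = 0 := by
    have := htop ((1 : F') ⊗ₜ[F] v)
    rwa [LinearMap.baseChange_tmul] at this
  have h2 : e.repr (χ v) = 0 := by
    ext k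
    have := congrArg (fun z => (e.baseChange F').repr z k) h1
    simp only [map_zero, Finsupp.coe_zero, Pi.zero_apply] at this
    rw [Module.Basis.baseChange_repr_tmul, Algebra.smul_def, mul_one] at this
    exact (algebraMap F F').injective (by simpa using this)
  simpa using e.repr.map_eq_zero_iff.mp h2

omit [Fintype ι] in
theorem smul_cancel {w : F' ⊗[F] V} (hw : w ≠ 0) {c d : F'} (h : c • w = d • w) : c = d := by
  have h0 : (c - d) • w = 0 := by rw [show (c - d) • w = c • w - d • w from sub_smul c d w, h, sub_self]
  rcases smul_eq_zero.mp h0 with h1 | h2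
  · exact sub_eq_zero.mp h1
  · exact absurd h2 hw

theorem tensor_eq_zero_of_subsingleton [Subsingleton V] (x : F' ⊗[F] V) : x = 0 := by
  induction x using TensorProduct.induction_on with
  | zero => rfl
  | tmul a v => rw [Subsingleton.elim v 0, tmul_zero]
  | add x y hx hy => rw [hx, hy, add_zero]

end Aux

set_option maxHeartbeats 1000000 in
set_option synthInstance.maxHeartbeats 400000 in
/-- abstraction of the step (1) ⟹ (2) of Theorem 1.2: `F` characteristic
zero, `V` `n`-dimensional, `W ⊆ F' ⊗ V` a line whose `Aut(F'/F)`-conjugates span.  If a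
subgroup `Γ ⊆ GL(V)` stabilizes `W` and the centralizer in `End_F(V)` of (the `F`-algebra
generated by) `Γ` also stabilizes `W`, then the stabilizer `K` of `W` in `End_F(V)` is a
field with `[K : F] = n`, and hence the field of definition satisfies `[F(W) : F] = n`. -/
theorem stabilizer_degree_of_group_action
    (F F' : Type*) [Field F] [CharZero F] [Field F'] [Algebra F F']
    (V : Type*) [AddCommGroup V] [Module F V] [FiniteDimensional F V]
    (n : ℕ) (hV : Module.finrank F V = n)
    (W : Submodule F' (F' ⊗[F] V))
    (hW : Module.finrank F' ↥W = 1)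
    (hspan : Submodule.span F'
      (⋃ σ : F' ≃ₐ[F] F',
        (LinearMap.rTensor V σ.toLinearMap) '' (W : Set (F' ⊗[F] V))) = ⊤)
    (Γ : Subgroup (Module.End F V)ˣ)
    (hΓ : ∀ g ∈ Γ, ∀ x ∈ W, LinearMap.baseChange F' ((g : (Module.End F V)ˣ) : Module.End F V) x ∈ W)
    (hcent : ∀ φ ∈ Subalgebra.centralizer F
        (Algebra.adjoin F ((fun g : (Module.End F V)ˣ => (g : Module.End F V)) ''
          (Γ : Set (Module.End F V)ˣ)) : Subalgebra F (Module.End F V)),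
      ∀ x ∈ W, LinearMap.baseChange F' φ x ∈ W)
    (M : IntermediateField F F')
    (hdef : IsDefinedOver F F' V M W)
    (hmin : ∀ M' : IntermediateField F F', IsDefinedOver F F' V M' W → M ≤ M') :
    (∃ K : Subalgebra F (Module.End F V),
      (K : Set (Module.End F V)) =
        {φ : Module.End F V | ∀ x ∈ W, LinearMap.baseChange F' φ x ∈ W} ∧
      IsField ↥K ∧ Module.finrank F ↥K = n) ∧
    Module.finrank F ↥M = n := by
  classical
  obtain ⟨w, hwdef⟩ := hdef
  set e : Module.Basis (Fin n) F V := Module.finBasisOfFinrankEq F V hV with he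
  set w₀ : F' ⊗[F] V := LinearMap.rTensor V M.val.toLinearMap w with hw₀def
  have hw₀ : w₀ ≠ 0 := by
    intro h
    rw [h, Submodule.span_zero_singleton] at hwdef
    rw [hwdef] at hW
    simp [finrank_bot] at hW
  have hVnt : Nontrivial V := by
    by_contra h
    rw [not_nontrivial_iff_subsingleton] at h
    exact hw₀ (tensor_eq_zero_of_subsingleton w₀)
  set c : Fin n → F' := fun k => (e.baseChange F').repr w₀ k with hc
  have hcM : ∀ k, c k ∈ M := fun k => reprRT e M w k
  obtain ⟨j, hj⟩ : ∃ j, c j ≠ 0 := by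
    by_contra h
    push_neg at h
    exact hw₀ ((e.baseChange F').repr.map_eq_zero_iff.mp (Finsupp.ext h))
  set wh : F' ⊗[F] V := (c j)⁻¹ • w₀ with hwhdef
  have hwh0 : wh ≠ 0 := smul_ne_zero (inv_ne_zero hj) hw₀
  have hWwh : W = Submodule.span F' {wh} := by
    rw [hwdef]
    exact (Submodule.span_singleton_smul_eq (IsUnit.mk0 _ (inv_ne_zero hj)) w₀).symm
  set ch : Fin n → F' := fun k => (e.baseChange F').repr wh k with hch
  have hchc : ∀ k, ch k = (c j)⁻¹ * c k := by
    intro k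
    rw [hch]
    simp [hwhdef, map_smul, smul_eq_mul, hc]
  have hchM : ∀ k, ch k ∈ M := fun k => by
    rw [hchc k]; exact M.mul_mem (M.inv_mem (hcM j)) (hcM k)
  have hchj : ch j = 1 := by rw [hchc]; exact inv_mul_cancel₀ hj
  have hwhW : wh ∈ W := by rw [hWwh]; exact Submodule.mem_span_singleton_self wh
  set K : Subalgebra F (Module.End F V) := stabAlg W with hK
  -- eigenvalues
  have heig : ∀ φ : ↥K, ∃ lc : F',
      LinearMap.baseChange F' (φ : Module.End F V) wh = lc • wh := by
    intro φ
    have h1 : LinearMap.baseChange F' (φ : Module.End F V) wh ∈ W := φ.2 wh hwhW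
    rw [hWwh, Submodule.mem_span_singleton] at h1
    obtain ⟨d, hd⟩ := h1
    exact ⟨d, hd.symm⟩
  choose lam hlam using heig
  have lam_unique : ∀ (φ : ↥K) (d : F'),
      LinearMap.baseChange F' (φ : Module.End F V) wh = d • wh → lam φ = d :=
    fun φ d h => smul_cancel hwh0 ((hlam φ).symm.trans h)
  have lam_inj : Function.Injective lam := by
    intro φ ψ h
    have hsub : LinearMap.baseChange F' ((φ : Module.End F V) - (ψ : Module.End F V)) wh = 0 := by
      rw [LinearMap.baseChange_sub, LinearMap.sub_apply, hlam φ, hlam ψ, h, sub_self]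
    have := killZero e hspan hWwh hsub
    exact Subtype.ext (sub_eq_zero.mp this)
  have lam_one : lam 1 = 1 := by
    apply lam_unique
    rw [OneMemClass.coe_one, LinearMap.baseChange_one, Module.End.one_apply, one_smul]
  have lam_mul : ∀ φ ψ : ↥K, lam (φ * ψ) = lam φ * lam ψ := by
    intro φ ψ
    apply lam_unique
    rw [MulMemClass.coe_mul, LinearMap.baseChange_mul, Module.End.mul_apply, hlam ψ, map_smul,
      hlam φ, smul_smul, mul_comm (lam ψ)]
  have lam_zero : lam 0 = 0 := by
    apply lam_unique
    rw [ZeroMemClass.coe_zero, LinearMap.baseChange_zero, LinearMap.zero_apply, zero_smul]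
  have lam_add : ∀ φ ψ : ↥K, lam (φ + ψ) = lam φ + lam ψ := by
    intro φ ψ
    apply lam_unique
    rw [AddMemClass.coe_add, LinearMap.baseChange_add, LinearMap.add_apply, hlam φ, hlam ψ,
      add_smul]
  have lam_algebraMap : ∀ r : F, lam (algebraMap F ↥K r) = algebraMap F F' r := by
    intro r
    apply lam_unique
    have : ((algebraMap F ↥K r : ↥K) : Module.End F V) = algebraMap F (Module.End F V) r := rfl
    rw [this, Algebra.algebraMap_eq_smul_one, LinearMap.baseChange_smul, LinearMap.baseChange_one,
      LinearMap.smul_apply, Module.End.one_apply, algebraMap_smul]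
  have hKcomm : ∀ a b : ↥K, a * b = b * a := fun a b =>
    lam_inj (by rw [lam_mul, lam_mul, mul_comm])
  have hKfd : FiniteDimensional F ↥K := inferInstance
  have hK01 : (0 : ↥K) ≠ 1 := by
    intro h
    have h' : ((0 : ↥K) : Module.End F V) = 1 := by rw [h]; rfl
    obtain ⟨v, hv⟩ := exists_ne (0 : V)
    apply hv
    have := congrArg (fun ψ : Module.End F V => ψ v) h'
    simpa using this.symm
  have lam_ne : ∀ a : ↥K, a ≠ 0 → lam a ≠ 0 := by
    intro a ha h
    exact ha (lam_inj (h.trans lam_zero.symm))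
  have hKfield : IsField ↥K := by
    refine ⟨⟨0, 1, hK01⟩, hKcomm, ?_⟩
    intro a ha
    set mulA : ↥K →ₗ[F] ↥K :=
      { toFun := fun x => a * x
        map_add' := mul_add a
        map_smul' := fun r x => by simp [Algebra.mul_smul_comm] } with hmulA
    have hinj : Function.Injective mulA := by
      intro x y hxy
      simp only [hmulA, LinearMap.coe_mk, AddHom.coe_mk] at hxy
      apply lam_inj
      have : lam a * lam x = lam a * lam y := by
        rw [← lam_mul, ← lam_mul]
        exact congrArg lam hxy
      exact mul_left_cancel₀ (lam_ne a ha) this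
    obtain ⟨b, hb⟩ := LinearMap.surjective_of_injective hinj 1
    exact ⟨b, hb⟩
  -- Γ and centralizer
  have hadj : Algebra.adjoin F ((fun g : (Module.End F V)ˣ => (g : Module.End F V)) ''
      (Γ : Set (Module.End F V)ˣ)) ≤ K := by
    apply Algebra.adjoin_le
    rintro x ⟨g, hg, rfl⟩
    exact hΓ g hg
  -- K module structure on V
  letI instField : Field ↥K := hKfield.toField
  letI instMod : Module ↥K V := Module.compHom V (K.val.toRingHom : ↥K →+* Module.End F V)
  have hsmul : ∀ (k : ↥K) (v : V), k • v = (k : Module.End F V) v := fun _ _ => rfl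
  letI instTower : IsScalarTower F ↥K V := by
    constructor
    intro r k v
    rw [hsmul, hsmul]
    have : ((r • k : ↥K) : Module.End F V) = r • (k : Module.End F V) := rfl
    rw [this, LinearMap.smul_apply]
  obtain ⟨v₀, hv₀⟩ := exists_ne (0 : V)
  have ev_inj : ∀ φ : ↥K, φ ≠ 0 → (φ : Module.End F V) v₀ ≠ 0 := by
    intro φ hφ h
    obtain ⟨ψ, hψ⟩ := hKfield.mul_inv_cancel hφ
    have hψφ : ψ * φ = 1 := by rw [hKcomm]; exact hψ
    apply hv₀
    have : ((ψ * φ : ↥K) : Module.End F V) v₀ = v₀ := by rw [hψφ]; rfl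
    rw [MulMemClass.coe_mul, Module.End.mul_apply, h, map_zero] at this
    exact this.symm
  -- surjectivity of evaluation via projection
  have ev_surj : ∀ v : V, ∃ φ : ↥K, (φ : Module.End F V) v₀ = v := by
    set U : Submodule ↥K V := Submodule.span ↥K {v₀} with hU
    obtain ⟨q, hq⟩ := Submodule.exists_isCompl U
    set p' : V →ₗ[↥K] V := U.subtype ∘ₗ (U.projectionOnto q hq) with hp'
    haveI : LinearMap.CompatibleSMul V V F ↥K := ⟨fun f c x => f.map_smul (algebraMap F ↥K c) x⟩
    set pF : V →ₗ[F] V := LinearMap.restrictScalars F p' with hpF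
    have hv₀U : v₀ ∈ U := Submodule.mem_span_singleton_self v₀
    have hpv₀ : pF v₀ = v₀ := by
      have h1 : (U.projectionOnto q hq) v₀ = ⟨v₀, hv₀U⟩ := by
        have := Submodule.projectionOnto_apply_left hq (⟨v₀, hv₀U⟩ : ↥U)
        simpa using this
      show (U.subtype) ((U.projectionOnto q hq) v₀) = v₀
      rw [h1]
      rfl
    have hpU : ∀ v : V, pF v ∈ U := fun v => ((U.projectionOnto q hq) v).2
    have hpK : pF ∈ K := by
      refine hcent pF ?_
      rw [Subalgebra.mem_centralizer_iff]
      intro g hg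
      have hgK : g ∈ K := hadj hg
      refine LinearMap.ext fun v => ?_
      rw [Module.End.mul_apply, Module.End.mul_apply]
      show g (pF v) = pF (g v)
      calc g (pF v) = (⟨g, hgK⟩ : ↥K) • (p' v) := rfl
        _ = p' ((⟨g, hgK⟩ : ↥K) • v) := (p'.map_smul _ v).symm
        _ = pF (g v) := rfl
    have hp0 : (⟨pF, hpK⟩ : ↥K) ≠ 0 := by
      intro h0
      apply hv₀
      have hz : pF = 0 := congrArg Subtype.val h0
      rw [← hpv₀, hz, LinearMap.zero_apply]
    obtain ⟨binv, hbinv⟩ := hKfield.mul_inv_cancel hp0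
    intro v
    have hkey : pF ((binv : Module.End F V) v) = v := by
      have h1 : ((⟨pF, hpK⟩ * binv : ↥K) : Module.End F V) v = v := by
        rw [hbinv]
        rfl
      have h2 : ((⟨pF, hpK⟩ * binv : ↥K) : Module.End F V) v
          = pF ((binv : Module.End F V) v) := rfl
      rw [h2] at h1
      exact h1
    have hvU : v ∈ U := by rw [← hkey]; exact hpU _
    rw [hU, Submodule.mem_span_singleton] at hvU
    obtain ⟨k, hk⟩ := hvU
    exact ⟨k, hk⟩
  -- finrank K = n
  have hrankK : Module.finrank F ↥K = n := by
    set ev : ↥K →ₗ[F] V :=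
      { toFun := fun φ => (φ : Module.End F V) v₀
        map_add' := by
          intro x y
          show ((x : Module.End F V) + (y : Module.End F V)) v₀ = _
          rw [LinearMap.add_apply]
        map_smul' := by
          intro r x
          show (r • (x : Module.End F V)) v₀ = r • ((x : Module.End F V) v₀)
          rw [LinearMap.smul_apply] }
    have hbij : Function.Bijective ev := by
      constructor
      · intro x y hxy
        by_contra hne
        refine ev_inj (x - y) (sub_ne_zero.mpr hne) ?_
        show ((x : Module.End F V) - (y : Module.End F V)) v₀ = 0
        rw [LinearMap.sub_apply]
        have hxy' : (x : Module.End F V) v₀ = (y : Module.End F V) v₀ := hxy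
        rw [hxy', sub_self]
      · intro v
        obtain ⟨φ, hφ⟩ := ev_surj v
        exact ⟨φ, hφ⟩
    rw [(LinearEquiv.ofBijective ev hbij).finrank_eq, hV]
  -- lam is F-linear
  have lam_smul : ∀ (r : F) (φ : ↥K), lam (r • φ) = r • lam φ := by
    intro r φ
    rw [Algebra.smul_def r φ, lam_mul, lam_algebraMap, ← Algebra.smul_def]
  set lamL : ↥K →ₗ[F] F' :=
    { toFun := lam
      map_add' := lam_add
      map_smul' := fun r φ => by simp only [RingHom.id_apply]; exact lam_smul r φ } with hlamL
  -- the range of lam as an intermediate field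
  set M₀ : IntermediateField F F' :=
    { carrier := Set.range lam
      mul_mem' := by rintro x y ⟨φ, rfl⟩ ⟨ψ, rfl⟩; exact ⟨φ * ψ, lam_mul φ ψ⟩
      one_mem' := ⟨1, lam_one⟩
      add_mem' := by rintro x y ⟨φ, rfl⟩ ⟨ψ, rfl⟩; exact ⟨φ + ψ, lam_add φ ψ⟩
      zero_mem' := ⟨0, lam_zero⟩
      algebraMap_mem' := fun r => ⟨algebraMap F ↥K r, lam_algebraMap r⟩
      inv_mem' := by
        rintro x ⟨φ, rfl⟩
        by_cases hφ : φ = 0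
        · exact ⟨0, by rw [lam_zero, hφ, lam_zero, inv_zero]⟩
        · obtain ⟨ψ, hψ⟩ := hKfield.mul_inv_cancel hφ
          refine ⟨ψ, ?_⟩
          have h1 : lam φ * lam ψ = 1 := by rw [← lam_mul, hψ, lam_one]
          exact (eq_inv_of_mul_eq_one_right h1).symm ▸ rfl } with hM₀
  have memM₀ : ∀ x : F', x ∈ M₀ ↔ ∃ φ : ↥K, lam φ = x := fun x => Iff.rfl
  -- finrank of M₀
  have hrankM₀ : Module.finrank F ↥M₀ = n := by
    set lamM : ↥K →ₗ[F] ↥M₀ :=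
      { toFun := fun φ => ⟨lam φ, ⟨φ, rfl⟩⟩
        map_add' := fun φ ψ => Subtype.ext (lam_add φ ψ)
        map_smul' := fun r φ => Subtype.ext (lam_smul r φ) } with hlamM
    have hbij : Function.Bijective lamM := by
      constructor
      · intro x y hxy
        exact lam_inj (congrArg Subtype.val hxy)
      · rintro ⟨x, φ, rfl⟩
        exact ⟨φ, rfl⟩
    rw [← (LinearEquiv.ofBijective lamM hbij).finrank_eq]
    exact hrankK
  -- the eigenvalue formula
  have hformula : ∀ φ : ↥K, lam φ
      = ∑ i, ch i * algebraMap F F' (e.repr ((φ : Module.End F V) (e i)) j) := by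
    intro φ
    calc lam φ = lam φ * ch j := by rw [hchj, mul_one]
      _ = (e.baseChange F').repr (LinearMap.baseChange F' (φ : Module.End F V) wh) j := by
          rw [hlam φ, map_smul, Finsupp.smul_apply, smul_eq_mul]
      _ = ∑ i, ch i * algebraMap F F' (e.repr ((φ : Module.End F V) (e i)) j) :=
          reprBC e (φ : Module.End F V) wh j
  -- M₀ ≤ M
  have hM₀M : M₀ ≤ M := by
    rintro x ⟨φ, rfl⟩
    rw [hformula φ]
    exact sum_mem fun i _ =>
      M.mul_mem (hchM i) (M.algebraMap_mem _)
  -- the coordinates of wh lie in M₀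
  set Sc : Submodule F F' := Submodule.span F (Set.range ch) with hSc
  have hle : LinearMap.range lamL ≤ Sc := by
    rintro x ⟨φ, rfl⟩
    have : lamL φ = lam φ := rfl
    rw [this, hformula φ]
    refine Submodule.sum_mem _ fun i _ => ?_
    rw [mul_comm, ← Algebra.smul_def]
    exact Submodule.smul_mem _ _ (Submodule.subset_span ⟨i, rfl⟩)
  have hScfin : FiniteDimensional F ↥Sc := FiniteDimensional.span_of_finite F (Set.finite_range ch)
  have hfrR : Module.finrank F ↥(LinearMap.range lamL) = n := by
    have hinjL : Function.Injective lamL := lam_inj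
    rw [← (LinearEquiv.ofInjective lamL hinjL).finrank_eq]
    exact hrankK
  have hfrSc : Module.finrank F ↥Sc ≤ n := by
    have := finrank_range_le_card (R := F) ch
    simpa [Set.finrank] using this
  have hEq : LinearMap.range lamL = Sc :=
    Submodule.eq_of_le_of_finrank_le hle (by rw [hfrR]; exact hfrSc)
  have hchM₀ : ∀ k, ch k ∈ M₀ := by
    intro k
    have h1 : ch k ∈ Sc := Submodule.subset_span ⟨k, rfl⟩
    rw [← hEq] at h1
    obtain ⟨φ, hφ⟩ := h1
    exact ⟨φ, hφ⟩
  -- W is defined over M₀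
  have hdef₀ : IsDefinedOver F F' V M₀ W := by
    refine ⟨∑ k, (⟨ch k, hchM₀ k⟩ : ↥M₀) ⊗ₜ[F] (e k), ?_⟩
    have hrt : LinearMap.rTensor V M₀.val.toLinearMap
        (∑ k, (⟨ch k, hchM₀ k⟩ : ↥M₀) ⊗ₜ[F] (e k)) = wh := by
      rw [map_sum]
      have hterm : ∀ k, LinearMap.rTensor V M₀.val.toLinearMap
          ((⟨ch k, hchM₀ k⟩ : ↥M₀) ⊗ₜ[F] (e k)) = ch k ⊗ₜ[F] (e k) := by
        intro k
        rw [LinearMap.rTensor_tmul]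
        rfl
      rw [Finset.sum_congr rfl fun k _ => hterm k]
      have hexp := Module.Basis.sum_repr (e.baseChange F') wh
      rw [← hexp]
      refine Finset.sum_congr rfl fun k _ => ?_
      rw [Module.Basis.baseChange_apply, TensorProduct.smul_tmul', smul_eq_mul, mul_one]
    rw [hrt]
    exact hWwh
  have hMM₀ : M = M₀ := le_antisymm (hmin M₀ hdef₀) hM₀M
  constructor
  · exact ⟨K, rfl, hKfield, hrankK⟩
  · rw [hMM₀]
    exact hrankM₀
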